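/- Let E be a real inner product space, F : E → ℝ convex and differentiable, and η > 0. For any v, w ∈ E, setting v' := v − η∇F(v), F(v) − F(w) ≤ (η/2)‖∇F(v)‖² + (1/(2η))·(‖v − w‖² − ‖v' − w‖²). (Eq. (23) of the paper: one-step gradient descent inequality for convex functions.) -/

import Mathlib

open Filter Topology

lemma convex_grad_ineq {E : Type*} [NormedAddCommGroup E] [InnerProductSpace ℝ E]
    (F : E → ℝ) (G : E → E)
    (hconv : ConvexOn ℝ Set.univ F)
    (hF : ∀ x, HasFDerivAt F (innerSL ℝ (G x)) x)
    (v w : E) : F v - F w ≤ inner ℝ (G v) (v - w) := by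
  set g : ℝ → ℝ := fun t => F (v + t • (w - v)) with hg
  have hline : HasDerivAt (fun t : ℝ => v + t • (w - v)) (w - v) 0 := by
    simpa using ((hasDerivAt_id (0:ℝ)).smul_const (w - v)).const_add v
  have hgd : HasDerivAt g (inner ℝ (G v) (w - v)) 0 := by
    have := (hF (v + (0:ℝ) • (w - v))).comp_hasDerivAt 0 hline
    simp at this; exact this
  have hslope : Tendsto (slope g 0) (𝓝[>] 0) (𝓝 (inner ℝ (G v) (w - v))) :=
    (hasDerivAt_iff_tendsto_slope.mp hgd).mono_left
      (nhdsWithin_mono _ (fun t ht => ne_of_gt ht))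
  have hbound : ∀ᶠ t in 𝓝[>] (0:ℝ), slope g 0 t ≤ F w - F v := by
    filter_upwards [Ioo_mem_nhdsGT_of_mem (by norm_num : (0:ℝ) ∈ Set.Ico 0 1)]
      with t ht
    have ht0 := ht.1
    have ht1 := ht.2
    have hconvt : g t ≤ (1 - t) * F v + t * F w := by
      have := hconv.2 (Set.mem_univ v) (Set.mem_univ w)
        (by linarith : (0:ℝ) ≤ 1 - t) ht0.le (by ring)
      simp only [smul_eq_mul] at this
      have heq : v + t • (w - v) = (1 - t) • v + t • w := by
        rw [smul_sub, sub_smul, one_smul]; abel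
      rw [hg]; simp only [heq]; exact this
    rw [slope_def_field]
    simp only [sub_zero]
    rw [div_le_iff₀ ht0]
    have hg0 : g 0 = F v := by simp [hg]
    rw [hg0]; nlinarith
  have := le_of_tendsto hslope hbound
  have hinner : (inner ℝ (G v) (w - v) : ℝ) = - inner ℝ (G v) (v - w) := by
    rw [← inner_neg_right]; congr 1; abel
  linarith [this, hinner ▸ this]

theorem stmt7 {E : Type*} [NormedAddCommGroup E] [InnerProductSpace ℝ E]
    (F : E → ℝ) (G : E → E) (η : ℝ) (hη : 0 < η)
    (hconv : ConvexOn ℝ Set.univ F)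
    (hF : ∀ x, HasFDerivAt F (innerSL ℝ (G x)) x)
    (v w : E) :
    F v - F w ≤ η / 2 * ‖G v‖ ^ 2 +
      1 / (2 * η) * (‖v - w‖ ^ 2 - ‖(v - η • G v) - w‖ ^ 2) := by
  have key := convex_grad_ineq F G hconv hF v w
  have hexp : ‖(v - η • G v) - w‖ ^ 2
      = ‖v - w‖ ^ 2 - 2 * η * inner ℝ (G v) (v - w) + η ^ 2 * ‖G v‖ ^ 2 := by
    have h1 : (v - η • G v) - w = (v - w) - η • G v := by abel
    rw [h1, @norm_sub_sq_real, real_inner_smul_right, norm_smul, real_inner_comm]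
    simp [abs_of_pos hη]
    ring
  rw [hexp]
  have h2η : (2 * η) ≠ 0 := by positivity
  field_simp
  nlinarith [mul_le_mul_of_nonneg_left key (by positivity : (0:ℝ) ≤ 4 * η)]
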